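/- arXiv:1304.0063 — 3 statements merged into one kernel-verified Lean document; each statement's English description precedes it below -/
import Mathlib

section
/- D is a half-factorial domain (HFD) if and only if for every nonzero nonunit a ∈ D the following hold: (i) there is no infinite sequence a = a₀, a₁, a₂, … of nonzero nonunits of D with each quotient aᵢ/aᵢ₊₁ ∈ D irreducible; (ii) every maximal chain from a ends at an irreducible element of D; and (iii) any two maximal chains from a have the same length. -/
/-- A chain from a nonzero nonunit `a` : a finite sequence `a = f 0, f 1, …, f n` of
nonzero nonunit elements of `D` such that for `1 ≤ i ≤ n` the quotient `f (i-1) / f i`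
lies in `D` and is irreducible, i.e. `f (i-1) = π * f i` for some irreducible `π`. -/
def IsChainFrom (D : Type*) [CommRing D] (a : D) (n : ℕ) (f : ℕ → D) : Prop :=
  f 0 = a ∧ (∀ i ≤ n, f i ≠ 0 ∧ ¬ IsUnit (f i)) ∧
    ∀ i, 1 ≤ i → i ≤ n → ∃ π : D, Irreducible π ∧ f (i - 1) = π * f i

/-- A chain from `a` is maximal if its last term cannot be further factored: there is no
nonzero nonunit `c` with `f n / c` in `D` irreducible, i.e. `f n = π * c`. -/
def IsMaximalChainFrom (D : Type*) [CommRing D] (a : D) (n : ℕ) (f : ℕ → D) : Prop :=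
  IsChainFrom D a n f ∧
    ¬ ∃ c : D, c ≠ 0 ∧ ¬ IsUnit c ∧ ∃ π : D, Irreducible π ∧ f n = π * c

section Helpers

variable {D : Type*} [CommRing D] [IsDomain D]

lemma irred_list_prod_ne_zero (l : List D) (h : ∀ p ∈ l, Irreducible p) : l.prod ≠ 0 := by
  induction l with
  | nil => simp
  | cons p t ih =>
    simp only [List.prod_cons]
    exact mul_ne_zero (h p (by simp)).ne_zero (ih fun q hq => h q (by simp [hq]))

lemma irred_list_prod_not_unit (l : List D) (hl : l ≠ []) (h : ∀ p ∈ l, Irreducible p) :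
    ¬ IsUnit l.prod := by
  cases l with
  | nil => exact absurd rfl hl
  | cons p t =>
    simp only [List.prod_cons]
    intro hu
    exact (h p (by simp)).not_isUnit (isUnit_of_mul_isUnit_left hu)

lemma chain_prod {a : D} {n : ℕ} {f : ℕ → D} (hc : IsChainFrom D a n f) :
    ∃ l : List D, l.length = n ∧ (∀ p ∈ l, Irreducible p) ∧ a = l.prod * f n := by
  induction n with
  | zero => exact ⟨[], rfl, by simp, by simp [hc.1.symm]⟩
  | succ n ih =>
    obtain ⟨h0, h1, h2⟩ := hc
    obtain ⟨l, hlen, hirr, hprod⟩ := ih ⟨h0, fun i hi => h1 i (hi.trans (Nat.le_succ n)),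
      fun i h1i hin => h2 i h1i (hin.trans (Nat.le_succ n))⟩
    obtain ⟨π, hπ, heq⟩ := h2 (n+1) (by omega) le_rfl
    simp only [Nat.add_sub_cancel] at heq
    refine ⟨l ++ [π], by simp [hlen], ?_, ?_⟩
    · intro p hp
      rcases List.mem_append.1 hp with hh | hh
      · exact hirr p hh
      · simp at hh; subst hh; exact hπ
    · rw [hprod, heq, List.prod_append, List.prod_singleton]
      ring

lemma inf_chain_prod {a : D} {g : ℕ → D}
    (h0 : g 0 = a) (h2 : ∀ i, ∃ π : D, Irreducible π ∧ g i = π * g (i+1)) (k : ℕ) :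
    ∃ l : List D, l.length = k ∧ (∀ p ∈ l, Irreducible p) ∧ a = l.prod * g k := by
  induction k with
  | zero => exact ⟨[], rfl, by simp, by simp [h0.symm]⟩
  | succ k ih =>
    obtain ⟨l, hlen, hirr, hprod⟩ := ih
    obtain ⟨π, hπ, heq⟩ := h2 k
    refine ⟨l ++ [π], by simp [hlen], ?_, ?_⟩
    · intro p hp
      rcases List.mem_append.1 hp with hh | hh
      · exact hirr p hh
      · simp at hh; subst hh; exact hπ
    · rw [hprod, heq, List.prod_append, List.prod_singleton]
      ring

lemma list_to_maxchain (l : List D) (hl : l ≠ []) (h : ∀ p ∈ l, Irreducible p) :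
    IsMaximalChainFrom D l.prod (l.length - 1) (fun i => (l.drop i).prod) := by
  have hlen : 0 < l.length := List.length_pos_iff.2 hl
  have hdrop_ne : ∀ i ≤ l.length - 1, l.drop i ≠ [] := by
    intro i hi hnil
    have hld : (l.drop i).length = l.length - i := List.length_drop
    rw [hnil] at hld
    simp at hld
    omega
  have hirr_drop : ∀ i, ∀ p ∈ l.drop i, Irreducible p :=
    fun i p hp => h p (List.mem_of_mem_drop hp)
  have hlast : Irreducible ((l.drop (l.length - 1)).prod) := by
    have hlen1 : (l.drop (l.length - 1)).length = 1 := by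
      rw [List.length_drop]; omega
    obtain ⟨x, hx⟩ := List.length_eq_one_iff.1 hlen1
    rw [hx, List.prod_singleton]
    have hmem : x ∈ l.drop (l.length - 1) := by rw [hx]; simp
    exact h x (List.mem_of_mem_drop hmem)
  refine ⟨⟨by simp, ?_, ?_⟩, ?_⟩
  · intro i hi
    exact ⟨irred_list_prod_ne_zero _ (hirr_drop i),
      irred_list_prod_not_unit _ (hdrop_ne i hi) (hirr_drop i)⟩
  · intro i h1i hin
    have hi1 : i - 1 < l.length := by omega
    refine ⟨l[i-1], h _ (List.getElem_mem hi1), ?_⟩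
    have hcd : l[i-1] :: l.drop (i-1+1) = l.drop (i-1) := List.getElem_cons_drop hi1
    have hi' : i - 1 + 1 = i := by omega
    rw [hi'] at hcd
    show (l.drop (i-1)).prod = l[i-1] * (l.drop i).prod
    rw [← hcd, List.prod_cons]
  · rintro ⟨c, hc0, hcu, π, hπ, heq⟩
    rcases hlast.isUnit_or_isUnit heq with hu | hu
    · exact hπ.not_isUnit hu
    · exact hcu hu

end Helpers

/-- `D` is a half-factorial domain (atomic and all factorizations of a given element
into irreducibles have the same length) iff for every nonzero nonunit `a` : (i) there is
no infinite chain starting at `a`; (ii) every maximal chain from `a` ends at an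
irreducible; (iii) any two maximal chains from `a` have the same length. -/
theorem hfd_iff_paths_same_length (D : Type*) [CommRing D] [IsDomain D] :
    ((∀ a : D, a ≠ 0 → ¬ IsUnit a →
        ∃ l : List D, l ≠ [] ∧ (∀ p ∈ l, Irreducible p) ∧ a = l.prod) ∧
      (∀ l₁ l₂ : List D, (∀ p ∈ l₁, Irreducible p) → (∀ p ∈ l₂, Irreducible p) →
        l₁.prod = l₂.prod → l₁.length = l₂.length)) ↔
      (∀ a : D, a ≠ 0 → ¬ IsUnit a →
        (¬ ∃ g : ℕ → D, g 0 = a ∧ (∀ i, g i ≠ 0 ∧ ¬ IsUnit (g i)) ∧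
            ∀ i, ∃ π : D, Irreducible π ∧ g i = π * g (i + 1)) ∧
        (∀ (n : ℕ) (f : ℕ → D), IsMaximalChainFrom D a n f → Irreducible (f n)) ∧
        (∀ (n : ℕ) (f : ℕ → D) (m : ℕ) (g : ℕ → D),
          IsMaximalChainFrom D a n f → IsMaximalChainFrom D a m g → n = m)) := by
  constructor
  · rintro ⟨hat, hlen⟩ a ha hau
    have hmaxirr : ∀ (n : ℕ) (f : ℕ → D), IsMaximalChainFrom D a n f → Irreducible (f n) := by
      rintro n f ⟨hc, hmax⟩
      have hfn := hc.2.1 n le_rfl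
      obtain ⟨m, hmne, hmirr, hmprod⟩ := hat (f n) hfn.1 hfn.2
      match m, hmne with
      | [p], _ =>
        simp only [List.prod_singleton] at hmprod
        rw [hmprod]
        exact hmirr p (by simp)
      | p :: q :: s, _ =>
        exfalso
        apply hmax
        refine ⟨(q :: s).prod, irred_list_prod_ne_zero _ (fun x hx => hmirr x (by simp [hx])),
          irred_list_prod_not_unit _ (by simp) (fun x hx => hmirr x (by simp [hx])),
          p, hmirr p (by simp), ?_⟩
        rw [hmprod, List.prod_cons]
    refine ⟨?_, hmaxirr, ?_⟩
    · rintro ⟨g, hg0, hg1, hg2⟩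
      obtain ⟨l₀, hl₀ne, hl₀irr, hl₀prod⟩ := hat a ha hau
      obtain ⟨l, hllen, hlirr, hlprod⟩ := inf_chain_prod hg0 hg2 (l₀.length + 1)
      obtain ⟨m, hmne, hmirr, hmprod⟩ :=
        hat (g (l₀.length+1)) (hg1 _).1 (hg1 _).2
      have heq : l₀.length = (l ++ m).length := by
        apply hlen l₀ (l ++ m) hl₀irr
        · intro p hp
          rcases List.mem_append.1 hp with hh | hh
          · exact hlirr p hh
          · exact hmirr p hh
        · rw [← hl₀prod, List.prod_append, ← hmprod, ← hlprod]
      have hmpos : 0 < m.length := List.length_pos_iff.2 hmne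
      rw [List.length_append, hllen] at heq
      omega
    · intro n f m g hf hg
      obtain ⟨lf, hlf_len, hlf_irr, hlf_prod⟩ := chain_prod hf.1
      obtain ⟨lg, hlg_len, hlg_irr, hlg_prod⟩ := chain_prod hg.1
      have hfn : Irreducible (f n) := hmaxirr n f hf
      have hgm : Irreducible (g m) := hmaxirr m g hg
      have heq : (lf ++ [f n]).length = (lg ++ [g m]).length := by
        apply hlen
        · intro p hp
          rcases List.mem_append.1 hp with hh | hh
          · exact hlf_irr p hh
          · simp at hh; subst hh; exact hfn
        · intro p hp
          rcases List.mem_append.1 hp with hh | hh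
          · exact hlg_irr p hh
          · simp at hh; subst hh; exact hgm
        · rw [List.prod_append, List.prod_append, List.prod_singleton, List.prod_singleton,
            ← hlf_prod, ← hlg_prod]
      simp [hlf_len, hlg_len] at heq
      exact heq
  · intro h
    have key : ∀ a : D, a ≠ 0 → ¬ IsUnit a →
        ∃ l : List D, l ≠ [] ∧ (∀ p ∈ l, Irreducible p) ∧ a = l.prod := by
      intro a ha hau
      obtain ⟨hnoinf, hmaxirr, _⟩ := h a ha hau
      classical
      let P : D → Prop := fun x => ∃ c : D, c ≠ 0 ∧ ¬ IsUnit c ∧ ∃ π : D, Irreducible π ∧ x = π * c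
      let step : D → D := fun x => if hx : P x then Classical.choose hx else x
      let g : ℕ → D := fun k => step^[k] a
      have hstep : ∀ x, ∀ hx : P x,
          step x ≠ 0 ∧ ¬ IsUnit (step x) ∧ ∃ π, Irreducible π ∧ x = π * step x := by
        intro x hx
        obtain ⟨hc0, hcu, hπ⟩ := Classical.choose_spec hx
        simp only [step, dif_pos hx]
        exact ⟨hc0, hcu, hπ⟩
      have hsucc : ∀ k, g (k+1) = step (g k) := fun k => Function.iterate_succ_apply' step k a
      have h0 : g 0 = a := rfl
      by_cases hall : ∀ k, P (g k)
      · exfalso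
        apply hnoinf
        refine ⟨g, h0, ?_, ?_⟩
        · intro i
          induction i with
          | zero => exact ⟨ha, hau⟩
          | succ i _ =>
            rw [hsucc]
            exact ⟨(hstep _ (hall i)).1, (hstep _ (hall i)).2.1⟩
        · intro i
          obtain ⟨π, hπ, heq⟩ := (hstep _ (hall i)).2.2
          exact ⟨π, hπ, by rw [hsucc]; exact heq⟩
      · push_neg at hall
        have hex : ∃ k, ¬ P (g k) := hall
        have hNspec : ¬ P (g (Nat.find hex)) := Nat.find_spec hex
        set N := Nat.find hex with hN
        have hlt : ∀ k < N, P (g k) := by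
          intro k hk
          by_contra hc
          have hle : N ≤ k := Nat.find_le hc
          omega
        have hnn : ∀ k ≤ N, g k ≠ 0 ∧ ¬ IsUnit (g k) := by
          intro k hk
          cases k with
          | zero => exact ⟨ha, hau⟩
          | succ k =>
            rw [hsucc]
            have hpk := hlt k (by omega)
            exact ⟨(hstep _ hpk).1, (hstep _ hpk).2.1⟩
        have hchain : IsMaximalChainFrom D a N g := by
          refine ⟨⟨h0, hnn, ?_⟩, ?_⟩
          · intro i h1i hiN
            obtain ⟨π, hπ, heq⟩ := (hstep _ (hlt (i-1) (by omega))).2.2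
            rw [← hsucc] at heq
            have hi' : i - 1 + 1 = i := by omega
            rw [hi'] at heq
            exact ⟨π, hπ, heq⟩
          · exact hNspec
        have hirrN : Irreducible (g N) := hmaxirr N g hchain
        obtain ⟨l, hllen, hlirr, hlprod⟩ := chain_prod hchain.1
        refine ⟨l ++ [g N], by simp, ?_, by rw [List.prod_append, List.prod_singleton]; exact hlprod⟩
        intro p hp
        rcases List.mem_append.1 hp with hh | hh
        · exact hlirr p hh
        · simp at hh; subst hh; exact hirrN
    refine ⟨key, ?_⟩
    intro l₁ l₂ h1 h2 hprod
    rcases eq_or_ne l₁ [] with rfl | hl₁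
    · rcases eq_or_ne l₂ [] with rfl | hl₂
      · rfl
      · exfalso
        apply irred_list_prod_not_unit l₂ hl₂ h2
        rw [← hprod]; simp
    · rcases eq_or_ne l₂ [] with rfl | hl₂
      · exfalso
        apply irred_list_prod_not_unit l₁ hl₁ h1
        rw [hprod]; simp
      · have ha : l₁.prod ≠ 0 := irred_list_prod_ne_zero l₁ h1
        have hau : ¬ IsUnit l₁.prod := irred_list_prod_not_unit l₁ hl₁ h1
        obtain ⟨_, _, huniq⟩ := h l₁.prod ha hau
        have c1 := list_to_maxchain l₁ hl₁ h1
        have c2 := list_to_maxchain l₂ hl₂ h2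
        rw [← hprod] at c2
        have hNM := huniq _ _ _ _ c1 c2
        have p1 : 0 < l₁.length := List.length_pos_iff.2 hl₁
        have p2 : 0 < l₂.length := List.length_pos_iff.2 hl₂
        omega
end

section
/- D is almost atomic if and only if every nonzero element of K can be written in the form u·(π₁⋯πₙ)/(ξ₁⋯ξₘ), where u is a unit of D and π₁, …, πₙ, ξ₁, …, ξₘ are irreducible elements of D (n, m ≥ 0, empty products allowed); equivalently, the subgroup of K× generated by the irreducible elements of D together with the units of D is all of K×. -/
/-- `D` is almost atomic: for every nonzero nonunit `a` there are irreducibles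
`π₁, …, πₙ` (`n ≥ 0`) such that `a • π₁⋯πₙ` is a finite product of irreducibles. -/
def IsAlmostAtomicDomain (D : Type*) [CommRing D] : Prop :=
  ∀ a : D, a ≠ 0 → ¬ IsUnit a →
    ∃ l₁ l₂ : List D, (∀ p ∈ l₁, Irreducible p) ∧ l₂ ≠ [] ∧ (∀ p ∈ l₂, Irreducible p) ∧
      a * l₁.prod = l₂.prod

/-- `𝔉` : the subgroup of `Kˣ` generated by the irreducible elements of `D` together
with the units of `D`. -/
def frakF (D K : Type*) [CommRing D] [Field K] [Algebra D K] : Subgroup Kˣ :=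
  Subgroup.closure {u : Kˣ | ∃ p : D, (Irreducible p ∨ IsUnit p) ∧ (u : K) = algebraMap D K p}

section Aux

variable {D K : Type*} [CommRing D] [IsDomain D] [Field K] [Algebra D K] [IsFractionRing D K]

lemma irrProd_ne_zero {l : List D} (h : ∀ p ∈ l, Irreducible p) : l.prod ≠ 0 :=
  List.prod_ne_zero fun h0 => (h 0 h0).ne_zero rfl

lemma algMap_ne_zero {a : D} (ha : a ≠ 0) : algebraMap D K a ≠ 0 := by
  simpa [IsFractionRing.to_map_eq_zero_iff] using ha

lemma algMap_irrProd_ne_zero {l : List D} (h : ∀ p ∈ l, Irreducible p) :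
    algebraMap D K l.prod ≠ 0 := algMap_ne_zero (irrProd_ne_zero h)

/-- key form lemma for elements of D -/
lemma exists_form (hAA : IsAlmostAtomicDomain D) (a : D) (ha : a ≠ 0) :
    ∃ (u : Dˣ) (l₁ l₂ : List D), (∀ p ∈ l₁, Irreducible p) ∧ (∀ p ∈ l₂, Irreducible p) ∧
      algebraMap D K a = algebraMap D K (↑u * l₁.prod) / algebraMap D K l₂.prod := by
  by_cases hu : IsUnit a
  · exact ⟨hu.unit, [], [], by simp, by simp, by simp [hu.unit_spec]⟩
  · obtain ⟨l₁, l₂, h1, -, h2, heq⟩ := hAA a ha hu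
    refine ⟨1, l₂, l₁, h2, h1, ?_⟩
    have h1z : algebraMap D K l₁.prod ≠ 0 := algMap_irrProd_ne_zero h1
    rw [eq_div_iff h1z, ← map_mul, heq]
    simp

lemma unit_mem_frakF (u : Dˣ) (x : Kˣ) (hx : (x : K) = algebraMap D K (u : D)) :
    x ∈ frakF D K :=
  Subgroup.subset_closure ⟨(u : D), Or.inr u.isUnit, hx⟩

lemma prod_mem_frakF {l : List D} (h : ∀ p ∈ l, Irreducible p) (x : Kˣ)
    (hx : (x : K) = algebraMap D K l.prod) : x ∈ frakF D K := by
  induction l generalizing x with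
  | nil =>
    have : x = 1 := Units.ext (by simpa using hx)
    rw [this]; exact one_mem _
  | cons p t ih =>
    have hp : Irreducible p := h p (List.mem_cons_self (a := p) (l := t))
    have ht : ∀ q ∈ t, Irreducible q := fun q hq => h q (List.mem_cons_of_mem _ hq)
    have hp0 : algebraMap D K p ≠ 0 := algMap_ne_zero hp.ne_zero
    have ht0 : algebraMap D K t.prod ≠ 0 := algMap_irrProd_ne_zero ht
    have hxeq : x = Units.mk0 _ hp0 * Units.mk0 _ ht0 :=
      Units.ext (by simp [hx, List.prod_cons, map_mul])
    rw [hxeq]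
    exact mul_mem (Subgroup.subset_closure ⟨p, Or.inl hp, rfl⟩) (ih ht _ rfl)

end Aux

/-- `D` is almost atomic iff every nonzero element of `K` is of the form
`u • (π₁⋯πₙ)/(ξ₁⋯ξₘ)` with `u` a unit of `D` and the `πᵢ, ξᵢ` irreducible in `D`;
equivalently, iff the subgroup of `Kˣ` generated by the irreducibles and units of `D`
is all of `Kˣ`. -/
theorem almost_atomic_iff_frakF_eq_top
    (D K : Type*) [CommRing D] [IsDomain D] [Field K] [Algebra D K] [IsFractionRing D K] :
    (IsAlmostAtomicDomain D ↔
      ∀ x : K, x ≠ 0 → ∃ (u : Dˣ) (l₁ l₂ : List D),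
        (∀ p ∈ l₁, Irreducible p) ∧ (∀ p ∈ l₂, Irreducible p) ∧
        x = algebraMap D K (↑u * l₁.prod) / algebraMap D K l₂.prod) ∧
    (IsAlmostAtomicDomain D ↔ frakF D K = ⊤) := by
  have iff1 : IsAlmostAtomicDomain D ↔
      ∀ x : K, x ≠ 0 → ∃ (u : Dˣ) (l₁ l₂ : List D),
        (∀ p ∈ l₁, Irreducible p) ∧ (∀ p ∈ l₂, Irreducible p) ∧
        x = algebraMap D K (↑u * l₁.prod) / algebraMap D K l₂.prod := by
    constructor
    · intro hAA x hx
      obtain ⟨n, d, hd, rfl⟩ := IsFractionRing.div_surjective (A := D) x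
      have hd0 : d ≠ 0 := nonZeroDivisors.ne_zero hd
      have hn0 : n ≠ 0 := by
        intro h; apply hx; simp [h]
      obtain ⟨u, A, B, hA, hB, hnu⟩ := exists_form (K := K) hAA n hn0
      obtain ⟨v, C, E, hC, hE, hdv⟩ := exists_form (K := K) hAA d hd0
      refine ⟨u * v⁻¹, A ++ E, B ++ C, ?_, ?_, ?_⟩
      · intro p hp; rcases List.mem_append.1 hp with h | h
        exacts [hA p h, hE p h]
      · intro p hp; rcases List.mem_append.1 hp with h | h
        exacts [hB p h, hC p h]
      · have hB0 : algebraMap D K B.prod ≠ 0 := algMap_irrProd_ne_zero hB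
        have hC0 : algebraMap D K C.prod ≠ 0 := algMap_irrProd_ne_zero hC
        have hE0 : algebraMap D K E.prod ≠ 0 := algMap_irrProd_ne_zero hE
        have hv0 : algebraMap D K (v : D) ≠ 0 := algMap_ne_zero v.ne_zero
        have hvv : algebraMap D K (↑v⁻¹ : D) * algebraMap D K (v : D) = 1 := by
          rw [← map_mul]; simp
        rw [hnu, hdv]
        rw [div_div_div_eq]
        push_cast [map_mul, List.prod_append]
        field_simp
        linear_combination (-1 : K) * algebraMap D K A.prod * hvv
    · intro h a ha hu
      obtain ⟨u, l₁, l₂, h1, h2, heq⟩ := h (algebraMap D K a) (algMap_ne_zero ha)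
      have h2z : algebraMap D K l₂.prod ≠ 0 := algMap_irrProd_ne_zero h2
      rw [eq_div_iff h2z, ← map_mul] at heq
      have heqD : a * l₂.prod = ↑u * l₁.prod := IsFractionRing.injective D K heq
      match l₁, h1 with
      | [], _ =>
        have hiu : IsUnit (a * l₂.prod) := by
          rw [heqD]; simpa using u.isUnit
        exact absurd (isUnit_of_mul_isUnit_left hiu) hu
      | p :: t, h1 =>
        refine ⟨l₂, (↑u * p) :: t, h2, by simp, ?_, ?_⟩
        · intro q hq
          rcases List.mem_cons.1 hq with rfl | hq
          · exact (irreducible_units_mul u).2 (h1 p (List.mem_cons_self (a := p) (l := t)))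
          · exact h1 q (List.mem_cons_of_mem _ hq)
        · rw [heqD, List.prod_cons, List.prod_cons]; ring
  refine ⟨iff1, iff1.trans ?_⟩
  constructor
  · intro h
    rw [eq_top_iff]
    rintro x -
    obtain ⟨u, l₁, l₂, h1, h2, hx⟩ := h (x : K) x.ne_zero
    have hu0 : algebraMap D K (u : D) ≠ 0 := algMap_ne_zero u.ne_zero
    have h10 : algebraMap D K l₁.prod ≠ 0 := algMap_irrProd_ne_zero h1
    have h20 : algebraMap D K l₂.prod ≠ 0 := algMap_irrProd_ne_zero h2
    have hxeq : x = Units.mk0 _ hu0 * Units.mk0 _ h10 * (Units.mk0 _ h20)⁻¹ :=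
      Units.ext (by simp [hx, map_mul, div_eq_mul_inv])
    rw [hxeq]
    exact mul_mem (mul_mem (unit_mem_frakF u _ rfl) (prod_mem_frakF h1 _ rfl))
      (inv_mem (prod_mem_frakF h2 _ rfl))
  · intro htop x hx
    have hmem : Units.mk0 x hx ∈ frakF D K := htop ▸ Subgroup.mem_top _
    have key : ∀ (g : Kˣ), g ∈ frakF D K →
        ∃ (u : Dˣ) (l₁ l₂ : List D), (∀ p ∈ l₁, Irreducible p) ∧ (∀ p ∈ l₂, Irreducible p) ∧
          (g : K) = algebraMap D K (↑u * l₁.prod) / algebraMap D K l₂.prod := by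
      intro g hg
      refine Subgroup.closure_induction ?_ ?_ ?_ ?_ hg
      · rintro y ⟨p, hp | hp, hval⟩
        · exact ⟨1, [p], [], by simpa using hp, by simp, by simpa using hval⟩
        · exact ⟨hp.unit, [], [], by simp, by simp, by simp [hval, hp.unit_spec]⟩
      · exact ⟨1, [], [], by simp, by simp, by simp⟩
      · rintro y z - - ⟨u, A, B, hA, hB, hy⟩ ⟨v, C, E, hC, hE, hz⟩
        refine ⟨u * v, A ++ C, B ++ E, ?_, ?_, ?_⟩
        · intro p hp; rcases List.mem_append.1 hp with h' | h'
          exacts [hA p h', hC p h']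
        · intro p hp; rcases List.mem_append.1 hp with h' | h'
          exacts [hB p h', hE p h']
        · have harg : (↑u * A.prod) * (↑v * C.prod) = ↑(u * v) * (A.prod * C.prod) := by
            push_cast; ring
          rw [Units.val_mul, hy, hz, div_mul_div_comm, ← map_mul, ← map_mul, harg,
            List.prod_append, List.prod_append]
      · rintro y - ⟨u, A, B, hA, hB, hy⟩
        refine ⟨u⁻¹, B, A, hB, hA, ?_⟩
        have hA0 : algebraMap D K A.prod ≠ 0 := algMap_irrProd_ne_zero hA
        have hB0 : algebraMap D K B.prod ≠ 0 := algMap_irrProd_ne_zero hB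
        have hu0 : algebraMap D K (u : D) ≠ 0 := algMap_ne_zero u.ne_zero
        have huv : algebraMap D K ((u⁻¹ : Dˣ) : D) = (algebraMap D K (u : D))⁻¹ :=
          eq_inv_of_mul_eq_one_left (by rw [← map_mul]; simp)
        rw [Units.val_inv_eq_inv_val, hy, map_mul, map_mul, huv]
        field_simp
    obtain ⟨u, l₁, l₂, h1, h2, hval⟩ := key _ hmem
    exact ⟨u, l₁, l₂, h1, h2, by simpa using hval⟩
end

section
/- D is almost atomic if and only if for every pair of nonzero elements a, b ∈ K there is a weak path connecting a to b, i.e., a finite sequence x₀, x₁, …, xₖ of nonzero elements of K (k ≥ 0) with x₀D = aD and xₖD = bD as fractional ideals, such that for each 1 ≤ i ≤ k either xᵢ₋₁/xᵢ or xᵢ/xᵢ₋₁ is an irreducible element of D. -/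
/-- A weak path connecting `a` to `b` in the graph of divisibility: a finite sequence
`x 0, x 1, …, x k` of nonzero elements of `K` with `x 0 • D = a • D` and
`x k • D = b • D` as fractional ideals, such that each consecutive quotient
`x (i-1) / x i` or `x i / x (i-1)` is an irreducible element of `D`. -/
def WeakPath (D : Type*) {K : Type*} [CommRing D] [Field K] [Algebra D K]
    (a b : K) : Prop :=
  ∃ (k : ℕ) (x : ℕ → K), (∀ i ≤ k, x i ≠ 0) ∧
    Submodule.span D {x 0} = Submodule.span D {a} ∧
    Submodule.span D {x k} = Submodule.span D {b} ∧
    ∀ i, 1 ≤ i → i ≤ k →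
      (∃ π : D, Irreducible π ∧ x (i - 1) / x i = algebraMap D K π) ∨
      (∃ π : D, Irreducible π ∧ x i / x (i - 1) = algebraMap D K π)

set_option linter.unusedSectionVars false

section aux

variable {D K : Type*} [CommRing D] [IsDomain D] [Field K] [Algebra D K] [IsFractionRing D K]

lemma spanEq {x y : K} :
    Submodule.span D {x} = Submodule.span D {y} ↔ ∃ u : Dˣ, algebraMap D K u * x = y := by
  rw [Submodule.span_singleton_eq_span_singleton]
  exact exists_congr fun u => by rw [Units.smul_def, Algebra.smul_def]

lemma phi_ne_zero {r : D} (hr : r ≠ 0) : algebraMap D K r ≠ 0 :=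
  (map_ne_zero_iff _ (IsFractionRing.injective D K)).mpr hr

lemma wp_refl {a : K} (ha : a ≠ 0) : WeakPath D a a :=
  ⟨0, fun _ => a, fun _ _ => ha, rfl, rfl, fun i h1 h0 => absurd (h1.trans h0) (by omega)⟩

lemma wp_of_span {a b : K} (ha : a ≠ 0) (h : Submodule.span D {a} = Submodule.span D {b}) :
    WeakPath D a b :=
  ⟨0, fun _ => a, fun _ _ => ha, rfl, h, fun i h1 h0 => absurd (h1.trans h0) (by omega)⟩

lemma wp_symm {a b : K} (h : WeakPath D a b) : WeakPath D b a := by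
  obtain ⟨k, x, hx, h0, hk, hs⟩ := h
  refine ⟨k, fun i => x (k - i), fun i hi => hx _ (by omega), by simpa using hk, by simpa using h0,
    fun i hi1 hik => ?_⟩
  have e1 : k - (i - 1) = (k - i) + 1 := by omega
  beta_reduce
  rw [e1]
  have := hs (k - i + 1) (by omega) (by omega)
  simpa using this.symm

lemma wp_smul {a b : K} (c : K) (hc : c ≠ 0) (h : WeakPath D a b) :
    WeakPath D (c * a) (c * b) := by
  obtain ⟨k, x, hx, h0, hk, hs⟩ := h
  have key : ∀ y z : K, Submodule.span D {y} = Submodule.span D {z} →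
      Submodule.span D {c * y} = Submodule.span D {c * z} := by
    intro y z hyz
    obtain ⟨u, hu⟩ := spanEq.mp hyz
    exact spanEq.mpr ⟨u, by rw [← hu]; ring⟩
  refine ⟨k, fun i => c * x i, fun i hi => mul_ne_zero hc (hx i hi), key _ _ h0, key _ _ hk,
    fun i hi1 hik => ?_⟩
  beta_reduce
  simp only [mul_div_mul_left _ _ hc]
  exact hs i hi1 hik

lemma wp_trans {a b c : K} (hab : WeakPath D a b) (hbc : WeakPath D b c) : WeakPath D a c := by
  obtain ⟨k, x, hx, hx0, hxk, hxs⟩ := hab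
  obtain ⟨m, y, hy, hy0, hym, hys⟩ := hbc
  obtain ⟨u, hu⟩ := spanEq.mp (hy0.trans hxk.symm)
  set y' : ℕ → K := fun i => algebraMap D K u * y i with hy'
  have hu0 : (algebraMap D K u : K) ≠ 0 := phi_ne_zero u.ne_zero
  have hy'0 : y' 0 = x k := hu
  have hy'span : ∀ i, Submodule.span D {y' i} = Submodule.span D {y i} :=
    fun i => spanEq.mpr ⟨u⁻¹, by
      simp only [hy']
      rw [← mul_assoc, ← map_mul, Units.inv_mul, map_one, one_mul]⟩
  refine ⟨k + m, fun i => if i ≤ k then x i else y' (i - k), ?_, ?_, ?_, ?_⟩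
  · intro i hi
    beta_reduce
    by_cases h : i ≤ k
    · rw [if_pos h]; exact hx i h
    · rw [if_neg h]
      exact mul_ne_zero hu0 (hy (i - k) (by omega))
  · beta_reduce
    rw [if_pos (Nat.zero_le k)]
    exact hx0
  · beta_reduce
    by_cases h : k + m ≤ k
    · have hm : m = 0 := by omega
      subst hm
      rw [if_pos h]
      have e0 : k + 0 = k := rfl
      rw [e0, ← hy'0, hy'span 0]
      exact hym
    · rw [if_neg h, Nat.add_sub_cancel_left, hy'span m]
      exact hym
  · intro i hi1 hik
    beta_reduce
    by_cases h : i ≤ k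
    · have h' : i - 1 ≤ k := by omega
      rw [if_pos h, if_pos h']
      exact hxs i hi1 h
    · have hz1 : (if i - 1 ≤ k then x (i - 1) else y' (i - 1 - k)) = y' (i - k - 1) := by
        by_cases h' : i - 1 ≤ k
        · have e2 : i = k + 1 := by omega
          rw [if_pos h']
          have e3 : i - k - 1 = 0 := by omega
          rw [e3, hy'0]
          congr 1
          omega
        · have e : i - 1 - k = i - k - 1 := by omega
          rw [if_neg h', e]
      rw [hz1, if_neg h]
      have hstep := hys (i - k) (by omega) (by omega)
      have ed : y' (i - k - 1) / y' (i - k) = y (i - k - 1) / y (i - k) := by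
        simp only [hy']; rw [mul_div_mul_left _ _ hu0]
      have ed' : y' (i - k) / y' (i - k - 1) = y (i - k) / y (i - k - 1) := by
        simp only [hy']; rw [mul_div_mul_left _ _ hu0]
      rw [ed, ed']
      exact hstep

lemma wp_step {a : K} (ha : a ≠ 0) {π : D} (hπ : Irreducible π) :
    WeakPath D a (a * algebraMap D K π) := by
  have hπ0 : (algebraMap D K π : K) ≠ 0 := phi_ne_zero hπ.ne_zero
  refine ⟨1, fun i => if i = 0 then a else a * algebraMap D K π, ?_, by simp, by simp, ?_⟩
  · intro i _
    by_cases h : i = 0 <;> simp [h, ha, mul_ne_zero ha hπ0]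
  · intro i hi1 hik
    have : i = 1 := by omega
    subst this
    right
    exact ⟨π, hπ, by simp [mul_div_assoc, mul_div_cancel_left₀ _ ha]⟩

lemma wp_mul_list {a : K} (ha : a ≠ 0) (l : List D) (hl : ∀ p ∈ l, Irreducible p) :
    WeakPath D a (a * algebraMap D K l.prod) := by
  induction l generalizing a with
  | nil => simpa using wp_refl ha
  | cons π t ih =>
    have hπ : Irreducible π := hl π (by simp)
    have hπ0 : (algebraMap D K π : K) ≠ 0 := phi_ne_zero hπ.ne_zero
    have h1 : WeakPath D a (a * algebraMap D K π) := wp_step ha hπ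
    have h2 : WeakPath D (a * algebraMap D K π)
        ((a * algebraMap D K π) * algebraMap D K t.prod) :=
      ih (mul_ne_zero ha hπ0) (fun p hp => hl p (List.mem_cons_of_mem _ hp))
    have e : (a * algebraMap D K π) * algebraMap D K t.prod
        = a * algebraMap D K (π :: t).prod := by
      rw [List.prod_cons, map_mul]; ring
    rw [e] at h2
    exact wp_trans h1 h2

lemma wp_extract {a b : K} (h : WeakPath D a b) :
    ∃ (u : Dˣ) (l₁ l₂ : List D), (∀ p ∈ l₁, Irreducible p) ∧ (∀ p ∈ l₂, Irreducible p) ∧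
      a * algebraMap D K l₁.prod = algebraMap D K u * (b * algebraMap D K l₂.prod) := by
  obtain ⟨k, x, hx, h0, hk, hs⟩ := h
  have key : ∀ (n : ℕ), n ≤ k → ∃ (u : Dˣ) (l₁ l₂ : List D),
      (∀ p ∈ l₁, Irreducible p) ∧ (∀ p ∈ l₂, Irreducible p) ∧
      x 0 * algebraMap D K l₁.prod = algebraMap D K u * (x n * algebraMap D K l₂.prod) := by
    intro n
    induction n with
    | zero => exact fun _ => ⟨1, [], [], by simp, by simp, by simp⟩
    | succ m ih =>
      intro hm
      obtain ⟨u, l₁, l₂, hl₁, hl₂, heq⟩ := ih (by omega)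
      have hxm : x m ≠ 0 := hx m (by omega)
      have hxm1 : x (m + 1) ≠ 0 := hx (m + 1) hm
      rcases hs (m + 1) (by omega) hm with ⟨π, hπ, hq⟩ | ⟨π, hπ, hq⟩
      · -- x m / x (m+1) = π
        simp only [Nat.add_sub_cancel] at hq
        have hxe : x m = algebraMap D K π * x (m + 1) := by
          rw [div_eq_iff hxm1] at hq; exact hq
        refine ⟨u, l₁, π :: l₂, hl₁, ?_, ?_⟩
        · intro p hp
          rcases List.mem_cons.mp hp with h | h
          · exact h ▸ hπ
          · exact hl₂ p h
        · rw [List.prod_cons, map_mul]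
          rw [hxe] at heq
          linear_combination heq
      · -- x (m+1) / x m = π
        simp only [Nat.add_sub_cancel] at hq
        have hxe : x (m + 1) = algebraMap D K π * x m := by
          rw [div_eq_iff hxm] at hq; exact hq
        refine ⟨u, π :: l₁, l₂, ?_, hl₂, ?_⟩
        · intro p hp
          rcases List.mem_cons.mp hp with h | h
          · exact h ▸ hπ
          · exact hl₁ p h
        · rw [List.prod_cons, map_mul, hxe]
          linear_combination algebraMap D K π * heq
  obtain ⟨u, l₁, l₂, hl₁, hl₂, heq⟩ := key k le_rfl
  obtain ⟨v, hv⟩ := spanEq.mp h0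
  obtain ⟨w, hw⟩ := spanEq.mp hk
  refine ⟨v * u * w⁻¹, l₁, l₂, hl₁, hl₂, ?_⟩
  have hw' : x k = algebraMap D K (↑w⁻¹ : D) * b := by
    rw [← hw, ← mul_assoc, ← map_mul, Units.inv_mul, map_one, one_mul]
  rw [← hv]
  rw [hw'] at heq
  push_cast [map_mul]
  linear_combination algebraMap D K (v : D) * heq
end aux

/-- `D` is almost atomic iff any two nonzero elements of its fraction field `K` are
connected by a weak path in the graph of divisibility. -/
theorem almost_atomic_iff_weakly_connected
    (D K : Type*) [CommRing D] [IsDomain D] [Field K] [Algebra D K] [IsFractionRing D K] :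
    IsAlmostAtomicDomain D ↔ ∀ a b : K, a ≠ 0 → b ≠ 0 → WeakPath D a b := by
  constructor
  · intro H
    have path_to_one : ∀ r : D, r ≠ 0 → WeakPath D (algebraMap D K r) 1 := by
      intro r hr
      by_cases hu : IsUnit r
      · refine wp_of_span (phi_ne_zero hr) (spanEq.mpr ⟨hu.unit⁻¹, ?_⟩)
        rw [← map_mul]
        simp [IsUnit.val_inv_mul]
      · obtain ⟨l₁, l₂, hl₁, hne, hl₂, heq⟩ := H r hr hu
        have p1 : WeakPath D (algebraMap D K r) (algebraMap D K r * algebraMap D K l₁.prod) :=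
          wp_mul_list (phi_ne_zero hr) l₁ hl₁
        have p2 : WeakPath D 1 (1 * algebraMap D K l₂.prod) :=
          wp_mul_list one_ne_zero l₂ hl₂
        have e : algebraMap D K r * algebraMap D K l₁.prod = 1 * algebraMap D K l₂.prod := by
          rw [one_mul, ← map_mul, heq]
        rw [e] at p1
        exact wp_trans p1 (wp_symm p2)
    have path_one : ∀ a : K, a ≠ 0 → WeakPath D a 1 := by
      intro a ha
      obtain ⟨r, s, hs, hdiv⟩ := IsFractionRing.div_surjective (A := D) a
      have hs0 : s ≠ 0 := nonZeroDivisors.ne_zero hs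
      have hsK : algebraMap D K s ≠ 0 := phi_ne_zero hs0
      have har : a * algebraMap D K s = algebraMap D K r := by
        rw [← hdiv, div_mul_cancel₀ _ hsK]
      have hr0 : r ≠ 0 := by
        intro h
        rw [h, map_zero] at har
        exact (mul_ne_zero ha hsK) har
      have p1 : WeakPath D (a * 1) (a * algebraMap D K s) :=
        wp_smul a ha (wp_symm (path_to_one s hs0))
      rw [mul_one, har] at p1
      exact wp_trans p1 (path_to_one r hr0)
    exact fun a b ha hb => wp_trans (path_one a ha) (wp_symm (path_one b hb))
  · intro H a ha hnu
    have := H (algebraMap D K a) 1 (phi_ne_zero ha) one_ne_zero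
    obtain ⟨u, l₁, l₂, hl₁, hl₂, heq⟩ := wp_extract this
    rw [one_mul, ← map_mul, ← map_mul] at heq
    have heqD : a * l₁.prod = ↑u * l₂.prod := IsFractionRing.injective D K heq
    match l₂, hl₂, heqD with
    | [], _, heqD =>
      exfalso
      apply hnu
      apply isUnit_of_mul_isUnit_left (y := l₁.prod)
      rw [heqD]
      simp [Units.isUnit]
    | p :: t, hl₂, heqD =>
      refine ⟨l₁, (↑u * p) :: t, hl₁, by simp, ?_, ?_⟩
      · intro q hq
        rcases List.mem_cons.mp hq with h | h
        · exact h ▸ (irreducible_units_mul u).mpr (hl₂ p (by simp))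
        · exact hl₂ q (by simp [h])
      · rw [List.prod_cons] at heqD ⊢
        rw [heqD]; ring
end
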